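/- For positive integers n₁,...,n_r summing to n, it holds that r·log₂(r) ≤ n·H(⟨n₁,...,n_r⟩) + log₂(n), where H is the entropy of the length distribution. -/

import Mathlib

/-- For positive integers `n₁,…,n_r` summing to `n`:
`r·log₂ r ≤ n·H(⟨n₁,…,n_r⟩) + log₂ n`. -/
theorem r_log_r_le (r n : ℕ) (hr : 1 ≤ r) (ns : Fin r → ℕ)
    (hpos : ∀ i, 0 < ns i) (hsum : ∑ i, ns i = n) :
    (r : ℝ) * Real.logb 2 r
      ≤ (n : ℝ) * (∑ i, ((ns i : ℝ) / n) * Real.logb 2 ((n : ℝ) / ns i))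
        + Real.logb 2 n := by
  have hrn : r ≤ n := by
    calc r = ∑ _i : Fin r, 1 := by simp
    _ ≤ ∑ i, ns i := Finset.sum_le_sum fun i _ => hpos i
    _ = n := hsum
  have hn0 : 0 < n := lt_of_lt_of_le hr hrn
  have hnR : (0:ℝ) < n := by exact_mod_cast hn0
  have hnsR : ∀ i, (0:ℝ) < ns i := fun i => by exact_mod_cast hpos i
  have hrR : (0:ℝ) < r := by exact_mod_cast hr
  have hle : ∀ i, (ns i : ℝ) ≤ n := fun i => by
    have : ns i ≤ n := hsum ▸ Finset.single_le_sum (f := fun j => ns j)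
      (fun j _ => Nat.zero_le _) (Finset.mem_univ i)
    exact_mod_cast this
  have hsumR : ∑ i, (ns i : ℝ) = n := by exact_mod_cast hsum
  have hrw : (n:ℝ) * (∑ i, ((ns i : ℝ)/n) * Real.logb 2 ((n:ℝ)/ns i))
      = ∑ i, (ns i : ℝ) * Real.logb 2 ((n:ℝ)/ns i) := by
    rw [Finset.mul_sum]
    refine Finset.sum_congr rfl fun i _ => ?_
    field_simp
  have hlogb_nonneg : ∀ i, 0 ≤ Real.logb 2 ((n:ℝ)/ns i) := fun i => by
    refine Real.logb_nonneg one_lt_two ?_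
    rw [le_div_iff₀ (hnsR i)]
    linarith [hle i]
  -- key: r * log r ≤ ∑ log (n / ns i)   (natural log)
  have key2 : (r:ℝ) * Real.log r ≤ ∑ i, Real.log ((n:ℝ)/ns i) := by
    have h : ∑ i, Real.log ((ns i:ℝ) * r / n) ≤ 0 := by
      calc ∑ i, Real.log ((ns i:ℝ) * r / n)
          ≤ ∑ i, ((ns i:ℝ) * r / n - 1) :=
            Finset.sum_le_sum fun i _ =>
              Real.log_le_sub_one_of_pos (div_pos (mul_pos (hnsR i) hrR) hnR)
        _ = (∑ i, (ns i:ℝ)) * r / n - r := by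
            rw [Finset.sum_sub_distrib, ← Finset.sum_div, ← Finset.sum_mul]
            simp
        _ = 0 := by rw [hsumR]; field_simp; ring
    have h1 : ∀ i, Real.log ((ns i:ℝ) * r / n)
        = Real.log (ns i) + Real.log r - Real.log n := fun i => by
      rw [Real.log_div (mul_pos (hnsR i) hrR).ne' hnR.ne',
        Real.log_mul (ne_of_gt (hnsR i)) (ne_of_gt hrR)]
    have h2 : ∀ i, Real.log ((n:ℝ)/ns i)
        = Real.log n - Real.log (ns i) := fun i => by
      rw [Real.log_div (ne_of_gt hnR) (ne_of_gt (hnsR i))]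
    simp only [h1, h2] at h ⊢
    simp only [Finset.sum_sub_distrib, Finset.sum_add_distrib,
      Finset.sum_const, Finset.card_univ, Fintype.card_fin, nsmul_eq_mul] at h ⊢
    linarith
  have hlog2 : (0:ℝ) < Real.log 2 := Real.log_pos one_lt_two
  have step : (r:ℝ) * Real.logb 2 r ≤ ∑ i, Real.logb 2 ((n:ℝ)/ns i) := by
    simp only [Real.logb, ← Finset.sum_div, mul_div_assoc'] at *
    exact div_le_div_of_nonneg_right key2 hlog2.le |>.trans_eq rfl
  calc (r:ℝ) * Real.logb 2 r ≤ ∑ i, Real.logb 2 ((n:ℝ)/ns i) := step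
    _ ≤ ∑ i, (ns i:ℝ) * Real.logb 2 ((n:ℝ)/ns i) := by
        refine Finset.sum_le_sum fun i _ => ?_
        have h1 : (1:ℝ) ≤ ns i := by exact_mod_cast hpos i
        nlinarith [hlogb_nonneg i]
    _ ≤ (n:ℝ) * (∑ i, ((ns i : ℝ)/n) * Real.logb 2 ((n:ℝ)/ns i)) + Real.logb 2 n := by
        rw [hrw]
        have : 0 ≤ Real.logb 2 n :=
          Real.logb_nonneg one_lt_two (by exact_mod_cast hn0)
        linarith
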